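/- The function Z₁(y) = -(1/4) sech(y/√2)[-5 + 3√2 y tanh(y/√2) + cosh(√2 y)] satisfies ℒZ₁ = (3/2)Z₁, Z₁'(0) = 0, and Z₁(0) = 1, where ℒ = -d²/dy² - 1 + 3tanh²(y/√2). -/

import Mathlib

open Real

noncomputable def Gz (u : ℝ) : ℝ :=
  3 / 2 * (Real.cosh u)⁻¹ - 3 / 2 * u * Real.sinh u * ((Real.cosh u) ^ 2)⁻¹
    - 1 / 2 * Real.cosh u

noncomputable def Gz1 (u : ℝ) : ℝ :=
  -3 * Real.sinh u * ((Real.cosh u) ^ 2)⁻¹ - 3 / 2 * u * (Real.cosh u)⁻¹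
    + 3 * u * (Real.sinh u) ^ 2 * ((Real.cosh u) ^ 3)⁻¹ - 1 / 2 * Real.sinh u

noncomputable def Gz2 (u : ℝ) : ℝ :=
  -(9 / 2) * (Real.cosh u)⁻¹ + 9 * (Real.sinh u) ^ 2 * ((Real.cosh u) ^ 3)⁻¹
    + 15 / 2 * u * Real.sinh u * ((Real.cosh u) ^ 2)⁻¹
    - 9 * u * (Real.sinh u) ^ 3 * ((Real.cosh u) ^ 4)⁻¹
    - 1 / 2 * Real.cosh u

lemma hasDerivAt_Gz (u : ℝ) : HasDerivAt Gz (Gz1 u) u := by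
  have hC : Real.cosh u ≠ 0 := ne_of_gt (Real.cosh_pos _)
  have hC' := Real.hasDerivAt_cosh u
  have hS' := Real.hasDerivAt_sinh u
  have hInv := hC'.inv hC
  have hInv2 := (hC'.pow 2).inv (pow_ne_zero 2 hC)
  have h := ((hInv.const_mul (3/2 : ℝ)).sub
      ((((hasDerivAt_id u).const_mul (3/2 : ℝ)).mul hS').mul hInv2)).sub
      (hC'.const_mul (1/2 : ℝ))
  unfold Gz Gz1
  refine (h.congr_of_eventuallyEq (Filter.Eventually.of_forall fun y => rfl)).congr_deriv ?_
  simp only [id, Pi.inv_apply, Pi.pow_apply, Pi.mul_apply]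
  norm_num
  field_simp
  ring

lemma hasDerivAt_Gz1 (u : ℝ) : HasDerivAt Gz1 (Gz2 u) u := by
  have hC : Real.cosh u ≠ 0 := ne_of_gt (Real.cosh_pos _)
  have hC' := Real.hasDerivAt_cosh u
  have hS' := Real.hasDerivAt_sinh u
  have hInv := hC'.inv hC
  have hInv2 := (hC'.pow 2).inv (pow_ne_zero 2 hC)
  have hInv3 := (hC'.pow 3).inv (pow_ne_zero 3 hC)
  have h := (((((hS'.const_mul (-3 : ℝ)).mul hInv2).sub
      (((hasDerivAt_id u).const_mul (3/2 : ℝ)).mul hInv)).add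
      ((((hasDerivAt_id u).const_mul (3 : ℝ)).mul (hS'.pow 2)).mul hInv3)).sub
      (hS'.const_mul (1/2 : ℝ)))
  unfold Gz1 Gz2
  refine (h.congr_of_eventuallyEq (Filter.Eventually.of_forall fun y => rfl)).congr_deriv ?_
  simp only [id, Pi.inv_apply, Pi.pow_apply, Pi.mul_apply]
  norm_num
  field_simp
  ring

lemma sqrt2_pos : (0:ℝ) < Real.sqrt 2 := Real.sqrt_pos.mpr (by norm_num)

noncomputable def Fz (x : ℝ) : ℝ := Gz (x / Real.sqrt 2)
noncomputable def Fz1 (x : ℝ) : ℝ := Gz1 (x / Real.sqrt 2) * (1 / Real.sqrt 2)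
noncomputable def Fz2 (x : ℝ) : ℝ := Gz2 (x / Real.sqrt 2) * (1 / Real.sqrt 2) * (1 / Real.sqrt 2)

lemma hu' (x : ℝ) : HasDerivAt (fun x : ℝ => x / Real.sqrt 2) (1 / Real.sqrt 2) x := by
  simpa using (hasDerivAt_id x).div_const (Real.sqrt 2)

lemma hasDerivAt_Fz (x : ℝ) : HasDerivAt Fz (Fz1 x) x :=
  (hasDerivAt_Gz _).comp x (hu' x)

lemma hasDerivAt_Fz1 (x : ℝ) : HasDerivAt Fz1 (Fz2 x) x :=
  ((hasDerivAt_Gz1 _).comp x (hu' x)).mul_const _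

lemma feq : (fun x : ℝ =>
      -(1 / 4) * (Real.cosh (x / Real.sqrt 2))⁻¹
        * (-5 + 3 * Real.sqrt 2 * x * Real.tanh (x / Real.sqrt 2)
            + Real.cosh (Real.sqrt 2 * x))) = Fz := by
  funext x
  have hs : Real.sqrt 2 ≠ 0 := ne_of_gt sqrt2_pos
  have h2 : Real.sqrt 2 * Real.sqrt 2 = 2 := Real.mul_self_sqrt (by norm_num)
  set t := x / Real.sqrt 2 with ht
  have hx : x = Real.sqrt 2 * t := by rw [ht]; field_simp
  have h6 : 3 * Real.sqrt 2 * x = 6 * t := by rw [hx]; linear_combination 3 * t * h2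
  have h8 : Real.sqrt 2 * x = 2 * t := by rw [hx]; linear_combination t * h2
  have hC : Real.cosh t ≠ 0 := ne_of_gt (Real.cosh_pos _)
  have hsq : (Real.cosh t) ^ 2 - (Real.sinh t) ^ 2 = 1 := Real.cosh_sq_sub_sinh_sq _
  rw [h6, h8, Real.cosh_two_mul, Real.tanh_eq_sinh_div_cosh]
  show _ = Gz t
  rw [Gz]
  field_simp
  linear_combination (2 * Real.cosh t) * hsq

theorem Z1_properties :
    (∀ y : ℝ,
      -(deriv (deriv (fun x : ℝ =>
          -(1 / 4) * (Real.cosh (x / Real.sqrt 2))⁻¹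
            * (-5 + 3 * Real.sqrt 2 * x * Real.tanh (x / Real.sqrt 2)
                + Real.cosh (Real.sqrt 2 * x)))) y)
        - (-(1 / 4) * (Real.cosh (y / Real.sqrt 2))⁻¹
            * (-5 + 3 * Real.sqrt 2 * y * Real.tanh (y / Real.sqrt 2)
                + Real.cosh (Real.sqrt 2 * y)))
        + 3 * (Real.tanh (y / Real.sqrt 2)) ^ 2
            * (-(1 / 4) * (Real.cosh (y / Real.sqrt 2))⁻¹
                * (-5 + 3 * Real.sqrt 2 * y * Real.tanh (y / Real.sqrt 2)
                    + Real.cosh (Real.sqrt 2 * y)))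
      = (3 / 2) * (-(1 / 4) * (Real.cosh (y / Real.sqrt 2))⁻¹
            * (-5 + 3 * Real.sqrt 2 * y * Real.tanh (y / Real.sqrt 2)
                + Real.cosh (Real.sqrt 2 * y)))) ∧
    deriv (fun x : ℝ =>
        -(1 / 4) * (Real.cosh (x / Real.sqrt 2))⁻¹
          * (-5 + 3 * Real.sqrt 2 * x * Real.tanh (x / Real.sqrt 2)
              + Real.cosh (Real.sqrt 2 * x))) 0 = 0 ∧
    -(1 / 4) * (Real.cosh ((0:ℝ) / Real.sqrt 2))⁻¹
        * (-5 + 3 * Real.sqrt 2 * 0 * Real.tanh ((0:ℝ) / Real.sqrt 2)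
            + Real.cosh (Real.sqrt 2 * 0)) = 1 := by
  have hs : Real.sqrt 2 ≠ 0 := ne_of_gt sqrt2_pos
  have h2 : Real.sqrt 2 * Real.sqrt 2 = 2 := Real.mul_self_sqrt (by norm_num)
  have hd1 : deriv (fun x : ℝ =>
      -(1 / 4) * (Real.cosh (x / Real.sqrt 2))⁻¹
        * (-5 + 3 * Real.sqrt 2 * x * Real.tanh (x / Real.sqrt 2)
            + Real.cosh (Real.sqrt 2 * x))) = Fz1 := by
    rw [feq]; funext y; exact (hasDerivAt_Fz y).deriv
  have hd2 : deriv Fz1 = Fz2 := funext fun y => (hasDerivAt_Fz1 y).deriv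
  refine ⟨?_, ?_, ?_⟩
  · intro y
    have hfy := congrFun feq y
    rw [hd1, hd2, hfy]
    set u := y / Real.sqrt 2 with hu
    have hC : Real.cosh u ≠ 0 := ne_of_gt (Real.cosh_pos _)
    have hsq : (Real.cosh u) ^ 2 - (Real.sinh u) ^ 2 = 1 := Real.cosh_sq_sub_sinh_sq _
    have h12 : Fz2 y = Gz2 u * (1 / 2) := by
      rw [Fz2, mul_assoc]
      congr 1
      rw [div_mul_div_comm, one_mul, h2]
    rw [h12, Real.tanh_eq_sinh_div_cosh]
    show -(Gz2 u * (1/2)) - Gz u + 3 * (Real.sinh u / Real.cosh u) ^ 2 * Gz u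
        = 3 / 2 * Gz u
    rw [Gz, Gz2]
    field_simp
    linear_combination (6 * Real.cosh u ^ 3) * hsq
  · rw [hd1]
    norm_num [Fz1, Gz1]
  · norm_num
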